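/- Let D₁ : V → V^{⊗m} be an m-fold derivation and D₂ : V → V^{⊗n} an n-fold derivation of V (m, n ≥ 1). Then the commutator [D₁,D₂] := D₁∘D₂ − D₂∘D₁ : V → V^{⊗(m+n−1)}, computed using the extensions of D₁ and D₂ to tensor powers, is an (m+n−1)-fold derivation of V. -/

import Mathlib

open TensorProduct

section TP

variable (𝔽 : Type) [Field 𝔽] (V : Type) [Ring V] [Algebra 𝔽 V]

/-- A bundled `𝔽`-module. -/
structure BMod : Type 1 where
  carrier : Type
  [acg : AddCommGroup carrier]
  [mod : Module 𝔽 carrier]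

attribute [instance] BMod.acg BMod.mod

instance : CoeSort (BMod 𝔽) Type := ⟨BMod.carrier⟩

/-- `Tp k` is the `(k+1)`-fold tensor power `V^{⊗(k+1)}`, built by appending factors
on the right: `Tp 0 = V`, `Tp (k+1) = Tp k ⊗ V`. -/
noncomputable def Tp : ℕ → BMod 𝔽 :=
  fun n => Nat.rec (BMod.mk V) (fun _ ih => BMod.mk (TensorProduct 𝔽 ih.carrier V)) n

/-- Cast along an equality of indices. -/
noncomputable def castT {p q : ℕ} (h : p = q) : Tp 𝔽 V p ≃ₗ[𝔽] Tp 𝔽 V q :=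
  h ▸ LinearEquiv.refl 𝔽 (Tp 𝔽 V p)

/-- Left multiplication by `a` on the first tensor factor:
`a · (b₁ ⊗ ⋯ ⊗ bₙ) = (a b₁) ⊗ ⋯ ⊗ bₙ`. -/
noncomputable def lmulT (a : V) : (k : ℕ) → Tp 𝔽 V k →ₗ[𝔽] Tp 𝔽 V k
  | 0 => (LinearMap.mulLeft 𝔽 a : V →ₗ[𝔽] V)
  | (k+1) => LinearMap.rTensor V (lmulT a k)

/-- Right multiplication by `c` on the last tensor factor:
`(b₁ ⊗ ⋯ ⊗ bₙ) · c = b₁ ⊗ ⋯ ⊗ (bₙ c)`. -/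
noncomputable def rmulT (c : V) : (k : ℕ) → Tp 𝔽 V k →ₗ[𝔽] Tp 𝔽 V k
  | 0 => (LinearMap.mulRight 𝔽 c : V →ₗ[𝔽] V)
  | (k+1) => LinearMap.lTensor ((Tp 𝔽 V k : Type)) (LinearMap.mulRight 𝔽 c)

variable {𝔽 V}

/-- `D : V →ₗ V^{⊗(d+1)}` is a `(d+1)`-fold derivation if
`D(ab) = (Da)·b + a·(Db)` for the outer bimodule structure. -/
def IsNDeriv {d : ℕ} (D : V →ₗ[𝔽] Tp 𝔽 V d) : Prop :=
  ∀ a b : V, D (a * b) = rmulT 𝔽 V b d (D a) + lmulT 𝔽 V a d (D b)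

variable (𝔽 V)

/-- Concatenation `V^{⊗(p+1)} ⊗ V^{⊗(q+1)} → V^{⊗(p+q+2)}`. -/
noncomputable def concatT : (p q : ℕ) → Tp 𝔽 V p →ₗ[𝔽] Tp 𝔽 V q →ₗ[𝔽] Tp 𝔽 V (p + q + 1)
  | p, 0 => TensorProduct.mk 𝔽 (Tp 𝔽 V p) V
  | p, (q+1) => (LinearMap.rTensorHom V).comp (concatT p q)

variable {𝔽 V}

/-- The extension of a `(d+1)`-fold derivation `D` to `V^{⊗(k+1)}`:
`D(a₁⊗⋯⊗aₘ) = Σ_i a₁⊗⋯⊗D(aᵢ)⊗⋯⊗aₘ`. -/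
noncomputable def extD {d : ℕ} (D : V →ₗ[𝔽] Tp 𝔽 V d) :
    (k : ℕ) → Tp 𝔽 V k →ₗ[𝔽] Tp 𝔽 V (k + d)
  | 0 => (castT 𝔽 V (Nat.zero_add d).symm).toLinearMap ∘ₗ D
  | (k+1) =>
      ((castT 𝔽 V (Nat.succ_add k d).symm).toLinearMap ∘ₗ
        TensorProduct.lift ((concatT 𝔽 V k d).compl₂ D))
      + ((castT 𝔽 V (Nat.succ_add k d).symm).toLinearMap ∘ₗ
        LinearMap.rTensor V (extD D k))

/-- `D_L`: apply `D` to the first (leftmost) tensor factor only. -/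
noncomputable def extL {d : ℕ} (D : V →ₗ[𝔽] Tp 𝔽 V d) :
    (k : ℕ) → Tp 𝔽 V k →ₗ[𝔽] Tp 𝔽 V (k + d)
  | 0 => (castT 𝔽 V (Nat.zero_add d).symm).toLinearMap ∘ₗ D
  | (k+1) =>
      (castT 𝔽 V (Nat.succ_add k d).symm).toLinearMap ∘ₗ
        LinearMap.rTensor V (extL D k)

/-- `D_R`: apply `D` to the last (rightmost) tensor factor only. -/
noncomputable def extR {d : ℕ} (D : V →ₗ[𝔽] Tp 𝔽 V d) :
    (k : ℕ) → Tp 𝔽 V k →ₗ[𝔽] Tp 𝔽 V (k + d)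
  | 0 => (castT 𝔽 V (Nat.zero_add d).symm).toLinearMap ∘ₗ D
  | (k+1) =>
      (castT 𝔽 V (Nat.succ_add k d).symm).toLinearMap ∘ₗ
        TensorProduct.lift ((concatT 𝔽 V k d).compl₂ D)

/-- `D_{(i)}` (`i` 0-based from the left): apply `D` to the `(i+1)`-st tensor factor only. -/
noncomputable def extAt {d : ℕ} (D : V →ₗ[𝔽] Tp 𝔽 V d) :
    (k : ℕ) → (i : ℕ) → Tp 𝔽 V k →ₗ[𝔽] Tp 𝔽 V (k + d)
  | 0, _ => (castT 𝔽 V (Nat.zero_add d).symm).toLinearMap ∘ₗ D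
  | (k+1), i =>
      if i = k + 1 then
        (castT 𝔽 V (Nat.succ_add k d).symm).toLinearMap ∘ₗ
          TensorProduct.lift ((concatT 𝔽 V k d).compl₂ D)
      else
        (castT 𝔽 V (Nat.succ_add k d).symm).toLinearMap ∘ₗ
          LinearMap.rTensor V (extAt D k i)

variable (𝔽 V)

/-- Inserting a factor at the front: `consT a (b₁⊗⋯⊗bₙ) = a⊗b₁⊗⋯⊗bₙ`, bundled. -/
noncomputable def consT : (k : ℕ) → V →ₗ[𝔽] Tp 𝔽 V k →ₗ[𝔽] Tp 𝔽 V (k + 1)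
  | 0 => TensorProduct.mk 𝔽 V V
  | (k+1) => (LinearMap.rTensorHom V).comp (consT k)

/-- The cyclic permutation `σ` on `V^{⊗(k+1)}`:
`(a₁ ⊗ ⋯ ⊗ aₙ)^σ = aₙ ⊗ a₁ ⊗ ⋯ ⊗ aₙ₋₁`. -/
noncomputable def sigmaT : (k : ℕ) → Tp 𝔽 V k →ₗ[𝔽] Tp 𝔽 V k
  | 0 => LinearMap.id
  | (k+1) => TensorProduct.lift ((consT 𝔽 V k).flip)

end TP


section Helpers

variable {𝔽 : Type} [Field 𝔽] {V : Type} [Ring V] [Algebra 𝔽 V]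

theorem castT_rfl {p : ℕ} (h : p = p) (x : Tp 𝔽 V p) : castT 𝔽 V h x = x := rfl

theorem castT_castT {p q r : ℕ} (h : p = q) (h' : q = r) (x : Tp 𝔽 V p) :
    castT 𝔽 V h' (castT 𝔽 V h x) = castT 𝔽 V (h.trans h') x := by subst h; subst h'; rfl

theorem castT_lmul {p q : ℕ} (h : p = q) (a : V) (x : Tp 𝔽 V p) :
    castT 𝔽 V h (lmulT 𝔽 V a p x) = lmulT 𝔽 V a q (castT 𝔽 V h x) := by subst h; rfl

theorem castT_rmul {p q : ℕ} (h : p = q) (c : V) (x : Tp 𝔽 V p) :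
    castT 𝔽 V h (rmulT 𝔽 V c p x) = rmulT 𝔽 V c q (castT 𝔽 V h x) := by subst h; rfl

theorem castT_tmul {p q : ℕ} (h : p = q) (x : Tp 𝔽 V p) (c : V) :
    (castT 𝔽 V h x ⊗ₜ[𝔽] c : Tp 𝔽 V (q+1)) =
      castT 𝔽 V (congrArg Nat.succ h) (x ⊗ₜ[𝔽] c) := by subst h; rfl

theorem lmulT_tmul {k : ℕ} (a : V) (x : Tp 𝔽 V k) (c : V) :
    lmulT 𝔽 V a (k+1) (x ⊗ₜ[𝔽] c) = (lmulT 𝔽 V a k x ⊗ₜ[𝔽] c : Tp 𝔽 V (k+1)) := by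
  show LinearMap.rTensor V (lmulT 𝔽 V a k) (x ⊗ₜ[𝔽] c) = _
  rw [LinearMap.rTensor_tmul]
  rfl

theorem rmulT_tmul {k : ℕ} (b : V) (x : Tp 𝔽 V k) (c : V) :
    rmulT 𝔽 V b (k+1) (x ⊗ₜ[𝔽] c) = (x ⊗ₜ[𝔽] (c * b) : Tp 𝔽 V (k+1)) := by
  show LinearMap.lTensor _ (LinearMap.mulRight 𝔽 b) (x ⊗ₜ[𝔽] c) = _
  rw [LinearMap.lTensor_tmul]
  rfl

theorem rmulT_zero (b c : V) : rmulT 𝔽 V b 0 c = c * b := rfl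
theorem lmulT_zero (a c : V) : lmulT 𝔽 V a 0 c = a * c := rfl

theorem concatT_tmul {p q : ℕ} (x : Tp 𝔽 V p) (z : Tp 𝔽 V q) (c : V) :
    concatT 𝔽 V p (q+1) x (z ⊗ₜ[𝔽] c) = (concatT 𝔽 V p q x z ⊗ₜ[𝔽] c : Tp 𝔽 V (p+q+1+1)) := by
  show LinearMap.rTensor V (concatT 𝔽 V p q x) (z ⊗ₜ[𝔽] c) = _
  rw [LinearMap.rTensor_tmul]
  rfl

theorem Tp_induction {k : ℕ} {motive : Tp 𝔽 V (k+1) → Prop} (x : Tp 𝔽 V (k+1))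
    (zero : motive 0) (tmul : ∀ (y : Tp 𝔽 V k) (c : V), motive (y ⊗ₜ[𝔽] c : Tp 𝔽 V (k+1)))
    (add : ∀ u v, motive u → motive v → motive (u + v)) : motive x :=
  TensorProduct.induction_on (motive := motive) x zero tmul add

theorem Tp_add_tmul {k : ℕ} (u v : Tp 𝔽 V k) (c : V) :
    ((u + v) ⊗ₜ[𝔽] c : Tp 𝔽 V (k+1)) = (u ⊗ₜ[𝔽] c : Tp 𝔽 V (k+1)) + (v ⊗ₜ[𝔽] c : Tp 𝔽 V (k+1)) :=
  TensorProduct.add_tmul _ _ _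

end Helpers
section Helpers2

variable (𝔽 : Type) [Field 𝔽] (V : Type) [Ring V] [Algebra 𝔽 V]

/-- Bundled right multiplication on the last factor. -/
noncomputable def rmulB : (p : ℕ) → V →ₗ[𝔽] Tp 𝔽 V p →ₗ[𝔽] Tp 𝔽 V p
  | 0 => (LinearMap.mul 𝔽 V).flip
  | (p+1) => (LinearMap.lTensorHom (M := (Tp 𝔽 V p : Type)) (R := 𝔽)).comp (LinearMap.mul 𝔽 V).flip

/-- `mulCat p q x w`: multiply the last factor of `x` into the first factor of `w`
and concatenate. -/
noncomputable def mulCat : (p q : ℕ) → Tp 𝔽 V p →ₗ[𝔽] Tp 𝔽 V q →ₗ[𝔽] Tp 𝔽 V (p + q)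
  | p, 0 => (rmulB 𝔽 V p).flip
  | p, (q+1) => (LinearMap.rTensorHom V).comp (mulCat p q)

variable {𝔽 V}

theorem rmulB_eq (p : ℕ) (c : V) (x : Tp 𝔽 V p) : rmulB 𝔽 V p c x = rmulT 𝔽 V c p x := by
  cases p with
  | zero => rfl
  | succ p => rfl

theorem mulCat_zero (p : ℕ) (x : Tp 𝔽 V p) (c : V) :
    mulCat 𝔽 V p 0 x c = rmulT 𝔽 V c p x := rmulB_eq p c x

theorem mulCat_tmul (p q : ℕ) (x : Tp 𝔽 V p) (y : Tp 𝔽 V q) (c : V) :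
    mulCat 𝔽 V p (q+1) x (y ⊗ₜ[𝔽] c) = (mulCat 𝔽 V p q x y ⊗ₜ[𝔽] c : Tp 𝔽 V (p+q+1)) := by
  show LinearMap.rTensor V (mulCat 𝔽 V p q x) (y ⊗ₜ[𝔽] c) = _
  rw [LinearMap.rTensor_tmul]
  rfl

end Helpers2
section Helpers3

variable {𝔽 : Type} [Field 𝔽] {V : Type} [Ring V] [Algebra 𝔽 V]

theorem concatT_rmul (p q : ℕ) (x : Tp 𝔽 V p) (z : Tp 𝔽 V q) (c : V) :
    concatT 𝔽 V p q x (rmulT 𝔽 V c q z) = rmulT 𝔽 V c (p+q+1) (concatT 𝔽 V p q x z) := by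
  cases q with
  | zero =>
    show x ⊗ₜ[𝔽] (rmulT 𝔽 V c 0 z) = rmulT 𝔽 V c (p+0+1) (x ⊗ₜ[𝔽] z)
    exact (rmulT_tmul c x z).symm
  | succ q =>
    induction z using Tp_induction with
    | zero => simp
    | tmul y e => rw [rmulT_tmul, concatT_tmul, concatT_tmul, rmulT_tmul]
    | add u v hu hv => simp only [map_add, hu, hv]; try rfl

theorem concatT_lmul (p q : ℕ) (a : V) (x : Tp 𝔽 V p) (z : Tp 𝔽 V q) :
    concatT 𝔽 V p q (lmulT 𝔽 V a p x) z = lmulT 𝔽 V a (p+q+1) (concatT 𝔽 V p q x z) := by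
  induction q with
  | zero =>
    show lmulT 𝔽 V a p x ⊗ₜ[𝔽] z = lmulT 𝔽 V a (p+0+1) (x ⊗ₜ[𝔽] z)
    exact (lmulT_tmul a x z).symm
  | succ q ih =>
    induction z using Tp_induction with
    | zero => simp
    | tmul y e => rw [concatT_tmul, concatT_tmul, ih, lmulT_tmul]; rfl
    | add u v hu hv => simp only [map_add, hu, hv]; try rfl

theorem mulCat_zero_left (q : ℕ) (a : V) (w : Tp 𝔽 V q) :
    mulCat 𝔽 V 0 q a w = castT 𝔽 V (Nat.zero_add q).symm (lmulT 𝔽 V a q w) := by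
  induction q with
  | zero =>
    rw [castT_rfl]
    rfl
  | succ q ih =>
    induction w using Tp_induction with
    | zero => simp
    | tmul y e => rw [mulCat_tmul (𝔽 := 𝔽) 0 q a y e, lmulT_tmul, ih, castT_tmul]
    | add u v hu hv => simp only [map_add, hu, hv]; try rfl

theorem mulCat_tmul_left (p q : ℕ) (x : Tp 𝔽 V p) (c : V) (w : Tp 𝔽 V q) :
    mulCat 𝔽 V (p+1) q (x ⊗ₜ[𝔽] c) w =
      castT 𝔽 V (Nat.succ_add p q).symm
        (concatT 𝔽 V p q x (lmulT 𝔽 V c q w)) := by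
  induction q with
  | zero =>
    rw [castT_rfl]
    show rmulT 𝔽 V w (p+1) (x ⊗ₜ[𝔽] c) = x ⊗ₜ[𝔽] (lmulT 𝔽 V c 0 w)
    have := rmulT_tmul (𝔽 := 𝔽) (show V from w) x c; exact this
  | succ q ih =>
    induction w using Tp_induction with
    | zero => simp
    | tmul y e =>
      rw [mulCat_tmul (𝔽 := 𝔽) (p+1) q (x ⊗ₜ[𝔽] c) y e, lmulT_tmul, concatT_tmul, ih, castT_tmul]
    | add u v hu hv => simp only [map_add, hu, hv]; try rfl

end Helpers3
section Helpers4

variable {𝔽 : Type} [Field 𝔽] {V : Type} [Ring V] [Algebra 𝔽 V]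

theorem extD_zero {d : ℕ} (D : V →ₗ[𝔽] Tp 𝔽 V d) (a : Tp 𝔽 V 0) :
    extD D 0 a = castT 𝔽 V (Nat.zero_add d).symm (D a) := rfl

theorem extD_tmul {d : ℕ} (D : V →ₗ[𝔽] Tp 𝔽 V d) (k : ℕ) (y : Tp 𝔽 V k) (c : V) :
    extD D (k+1) (y ⊗ₜ[𝔽] c) =
      castT 𝔽 V (Nat.succ_add k d).symm (concatT 𝔽 V k d y (D c))
      + castT 𝔽 V (Nat.succ_add k d).symm (extD D k y ⊗ₜ[𝔽] c) := by
  show castT 𝔽 V (Nat.succ_add k d).symm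
      (TensorProduct.lift ((concatT 𝔽 V k d).compl₂ D) (y ⊗ₜ[𝔽] c))
    + castT 𝔽 V (Nat.succ_add k d).symm
      (LinearMap.rTensor V (extD D k) (y ⊗ₜ[𝔽] c)) = _
  rw [TensorProduct.lift.tmul, LinearMap.rTensor_tmul]
  rfl

theorem extD_rmul {d : ℕ} (D : V →ₗ[𝔽] Tp 𝔽 V d) (hD : IsNDeriv D) (k : ℕ) (b : V)
    (x : Tp 𝔽 V k) :
    extD D k (rmulT 𝔽 V b k x) =
      rmulT 𝔽 V b (k+d) (extD D k x) + mulCat 𝔽 V k d x (D b) := by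
  cases k with
  | zero =>
    have h := hD x b
    calc extD D 0 (rmulT 𝔽 V b 0 x)
        = castT 𝔽 V (Nat.zero_add d).symm
            (rmulT 𝔽 V b d (D x) + lmulT 𝔽 V x d (D b)) := congrArg _ h
      _ = rmulT 𝔽 V b (0+d) (extD D 0 x) + mulCat 𝔽 V 0 d x (D b) := by
          rw [map_add, castT_rmul]
          exact congrArg (fun t => rmulT 𝔽 V b (0+d) (extD D 0 x) + t)
            (mulCat_zero_left (𝔽 := 𝔽) d (show V from x) (D b)).symm
  | succ k =>
    induction x using Tp_induction with
    | zero => simp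
    | tmul y c =>
      have h := hD c b
      rw [rmulT_tmul, extD_tmul D k y (c * b), extD_tmul D k y c, mulCat_tmul_left, h]
      simp only [map_add]
      rw [concatT_rmul, ← rmulT_tmul (𝔽 := 𝔽) b (extD D k y) c, castT_rmul,
        castT_rmul (𝔽 := 𝔽) (Nat.succ_add k d).symm b (extD D k y ⊗ₜ[𝔽] c : Tp 𝔽 V (k+d+1))]
      abel
    | add u v hu hv =>
      simp only [map_add, LinearMap.add_apply, hu, hv]
      abel

end Helpers4
section Helpers5

variable {𝔽 : Type} [Field 𝔽] {V : Type} [Ring V] [Algebra 𝔽 V]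

theorem extD_lmul {d : ℕ} (D : V →ₗ[𝔽] Tp 𝔽 V d) (hD : IsNDeriv D) (k : ℕ) (a : V)
    (x : Tp 𝔽 V k) :
    extD D k (lmulT 𝔽 V a k x) =
      lmulT 𝔽 V a (k+d) (extD D k x)
      + castT 𝔽 V (Nat.add_comm d k) (mulCat 𝔽 V d k (D a) x) := by
  induction k with
  | zero =>
    have h := hD a x
    calc extD D 0 (lmulT 𝔽 V a 0 x)
        = castT 𝔽 V (Nat.zero_add d).symm
            (rmulT 𝔽 V x d (D a) + lmulT 𝔽 V a d (D x)) := congrArg _ h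
      _ = lmulT 𝔽 V a (0+d) (extD D 0 x)
          + castT 𝔽 V (Nat.add_comm d 0) (mulCat 𝔽 V d 0 (D a) x) := by
          rw [map_add, castT_lmul]
          exact (add_comm _ _).trans (congrArg (fun t => lmulT 𝔽 V a (0+d) (extD D 0 x)
            + castT 𝔽 V (Nat.add_comm d 0) t) (mulCat_zero d (D a) x)).symm
  | succ k ih =>
    induction x using Tp_induction with
    | zero => simp
    | tmul y c =>
      rw [lmulT_tmul, extD_tmul D k (lmulT 𝔽 V a k y) c, extD_tmul D k y c,
        concatT_lmul, ih y, mulCat_tmul, Tp_add_tmul,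
        ← lmulT_tmul (𝔽 := 𝔽) a (extD D k y) c,
        castT_tmul (Nat.add_comm d k) (mulCat 𝔽 V d k (D a) y) c]
      simp only [map_add]
      erw [map_add]
      rw [castT_lmul,
        castT_lmul (𝔽 := 𝔽) (Nat.succ_add k d).symm a (extD D k y ⊗ₜ[𝔽] c : Tp 𝔽 V (k+d+1)),
        castT_castT (𝔽 := 𝔽) (congrArg Nat.succ (Nat.add_comm d k)) (Nat.succ_add k d).symm
          (mulCat 𝔽 V d k (D a) y ⊗ₜ[𝔽] c : Tp 𝔽 V (Nat.succ (d+k)))]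
      rw [show castT 𝔽 V ((congrArg Nat.succ (Nat.add_comm d k)).trans (Nat.succ_add k d).symm)
          = castT 𝔽 V (Nat.add_comm d (k+1)) from rfl]
      abel
    | add u v hu hv =>
      simp only [map_add, LinearMap.add_apply, hu, hv]
      abel

end Helpers5
/-- if `D₁` is an `m`-fold derivation (`m = d₁+1`) and `D₂` an `n`-fold
derivation (`n = d₂+1`), then the commutator `D₁∘D₂ − D₂∘D₁` (computed using the
extensions to tensor powers) is an `(m+n−1)`-fold derivation. -/
theorem statement_0 (𝔽 : Type) [Field 𝔽] [CharZero 𝔽] (V : Type) [Ring V] [Algebra 𝔽 V]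
    {d₁ d₂ : ℕ} (D₁ : V →ₗ[𝔽] Tp 𝔽 V d₁) (D₂ : V →ₗ[𝔽] Tp 𝔽 V d₂)
    (h₁ : IsNDeriv D₁) (h₂ : IsNDeriv D₂) :
    IsNDeriv ((extD D₁ d₂) ∘ₗ D₂
      - (castT 𝔽 V (Nat.add_comm d₁ d₂)).toLinearMap ∘ₗ ((extD D₂ d₁) ∘ₗ D₁)) := by
  intro a b
  simp only [LinearMap.sub_apply, LinearMap.comp_apply, LinearEquiv.coe_coe,
    LinearMap.map_sub, map_sub]
  rw [h₂ a b, h₁ a b, map_add, map_add,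
    extD_rmul D₁ h₁ d₂ b (D₂ a), extD_lmul D₁ h₁ d₂ a (D₂ b),
    extD_rmul D₂ h₂ d₁ b (D₁ a), extD_lmul D₂ h₂ d₁ a (D₁ b)]
  simp only [map_add]
  rw [castT_castT, castT_rfl, castT_rmul, castT_lmul]
  abel
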